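/- Every connected graph G of order n ≥ 5 with Δ(G) = n − 2 and sdiam_3(G) ≤ 3 has at least 2n − 5 edges. -/

import Mathlib

open SimpleGraph

/-- The Steiner distance of a vertex set `S` in a graph `G`: the minimum number of edges
of a connected subgraph of `G` whose vertex set contains `S`. -/
noncomputable def steinerDist {V : Type*} (G : SimpleGraph V) (S : Set V) : ℕ :=
  sInf {m : ℕ | ∃ H : G.Subgraph, H.Connected ∧ S ⊆ H.verts ∧ H.edgeSet.ncard = m}

/-- The Steiner `k`-diameter of `G`: the maximum Steiner distance over all `k`-element
vertex subsets. -/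
noncomputable def sdiam {V : Type*} [Fintype V] (G : SimpleGraph V) (k : ℕ) : ℕ :=
  sSup {m : ℕ | ∃ S : Finset V, S.card = k ∧ steinerDist G ↑S = m}

/-- The maximum degree of `G`. -/
noncomputable def maxDeg {V : Type*} [Fintype V] (G : SimpleGraph V) : ℕ :=
  Finset.univ.sup fun v => (G.neighborSet v).ncard

/-- The minimum degree of `G`. -/
noncomputable def minDeg {V : Type*} [Fintype V] (G : SimpleGraph V) : ℕ :=
  sInf {d : ℕ | ∃ v : V, (G.neighborSet v).ncard = d}

/-- `e3 n ℓ d` : minimum number of edges of a graph of order `n` with maximum degree `ℓ`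
and Steiner 3-diameter at most `d` (`⊤` if no such graph exists). -/
noncomputable def e3 (n ℓ d : ℕ) : ℕ∞ :=
  sInf {m : ℕ∞ | ∃ G : SimpleGraph (Fin n),
    maxDeg G = ℓ ∧ sdiam G 3 ≤ d ∧ (G.edgeSet.ncard : ℕ∞) = m}


lemma cross_aux {V : Type*} {G : SimpleGraph V} {H : G.Subgraph}
    (s : Set V) {x y : H.verts} (w : H.coe.Walk x y) :
    ↑x ∈ s → ↑y ∉ s → ∃ p q, p ∈ s ∧ q ∉ s ∧ H.Adj p q := by
  induction w with
  | nil => exact fun hx hy => absurd hx hy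
  | @cons a b c h p ih =>
    intro hx hy
    by_cases hbs : (b : V) ∈ s
    · exact ih hbs hy
    · exact ⟨a, b, hx, hbs, h⟩

lemma cross {V : Type*} {G : SimpleGraph V} {H : G.Subgraph} (hc : H.Connected)
    {a c : V} (ha : a ∈ H.verts) (hcv : c ∈ H.verts) (s : Set V)
    (has : a ∈ s) (hcs : c ∉ s) : ∃ p q, p ∈ s ∧ q ∉ s ∧ H.Adj p q := by
  obtain ⟨w⟩ := hc.coe.preconnected ⟨a, ha⟩ ⟨c, hcv⟩
  exact cross_aux s w has hcs

lemma cross_single {V : Type*} {G : SimpleGraph V} {H : G.Subgraph} (hc : H.Connected)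
    {a c : V} (ha : a ∈ H.verts) (hcv : c ∈ H.verts) (hac : a ≠ c) :
    ∃ q, q ≠ a ∧ H.Adj a q := by
  obtain ⟨p, q, hp, hq, h⟩ := cross hc ha hcv ({a} : Set V) rfl (fun h => hac h.symm)
  have hpa : p = a := hp
  refine ⟨q, fun h' => hq (h' ▸ rfl), hpa ▸ h⟩

lemma key {V : Type*} [Fintype V] {G : SimpleGraph V} {H : G.Subgraph}
    (hc : H.Connected) (hcard : H.edgeSet.ncard ≤ 3)
    {u b b' : V} (hu : u ∈ H.verts) (hb : b ∈ H.verts) (hb' : b' ∈ H.verts)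
    (hub : u ≠ b) (hub' : u ≠ b') (hbb' : b ≠ b')
    (hbA : ∀ a, G.Adj u a → ¬ G.Adj b a)
    (hb'A : ∀ a, G.Adj u a → ¬ G.Adj b' a)
    (hbu : ¬ G.Adj u b) (hb'u : ¬ G.Adj u b') : False := by
  have hfin : H.edgeSet.Finite := Set.toFinite _
  obtain ⟨x, hxu, hex⟩ := cross_single hc hu hb hub
  have hxA : G.Adj u x := hex.adj_sub
  obtain ⟨y, hyb, hey⟩ := cross_single hc hb hu (Ne.symm hub)
  have hyG : G.Adj b y := hey.adj_sub
  have hyu : y ≠ u := fun h => hbu (h ▸ hyG).symm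
  have hyA : ¬ G.Adj u y := fun h => hbA y h hyG
  obtain ⟨y', hy'b, hey'⟩ := cross_single hc hb' hu (Ne.symm hub')
  have hy'G : G.Adj b' y' := hey'.adj_sub
  have hy'u : y' ≠ u := fun h => hb'u (h ▸ hy'G).symm
  have hy'A : ¬ G.Adj u y' := fun h => hb'A y' h hy'G
  have hxb : x ≠ b := fun h => hbu (h ▸ hxA)
  have hxb' : x ≠ b' := fun h => hb'u (h ▸ hxA)
  have hxy : x ≠ y := fun h => hyA (h ▸ hxA)
  have hxy' : x ≠ y' := fun h => hy'A (h ▸ hxA)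
  have huy : u ≠ y := fun h => hyu h.symm
  have huy' : u ≠ y' := fun h => hy'u h.symm
  by_cases heq : s(b, y) = s(b', y')
  · -- y = b' and y' = b ; edge b-b'
    rw [Sym2.eq_iff] at heq
    obtain ⟨h1, h2⟩ | ⟨h1, h2⟩ := heq
    · exact hbb' h1
    have hebb' : H.Adj b b' := h2 ▸ hey
    obtain ⟨p, q, hps, hqs, heq3⟩ := cross hc hb hu ({b, b'} : Set V) (by simp)
      (by simp [hub, hub'])
    have hpeq : p = b ∨ p = b' := hps
    have hqb : q ≠ b := fun h => hqs (by simp [h])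
    have hqb' : q ≠ b' := fun h => hqs (by simp [h])
    have hpqG : G.Adj p q := heq3.adj_sub
    have hqu : q ≠ u := by
      intro h
      rcases hpeq with h' | h'
      · exact hbu (by rw [← h, ← h']; exact hpqG.symm)
      · exact hb'u (by rw [← h, ← h']; exact hpqG.symm)
    have huq : u ≠ q := fun h => hqu h.symm
    have hqA : ¬ G.Adj u q := by
      intro h
      rcases hpeq with h' | h'
      · exact hbA q h (h' ▸ hpqG)
      · exact hb'A q h (h' ▸ hpqG)
    have hqx : q ≠ x := fun h => hqA (h ▸ hxA)
    have hxq : x ≠ q := fun h => hqx h.symm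
    have hd1 : s(u, x) ≠ s(b, b') := by
      simp only [ne_eq, Sym2.eq_iff]
      rintro (⟨h, _⟩ | ⟨h, _⟩)
      · exact hub h
      · exact hub' h
    have hd2 : s(u, x) ≠ s(p, q) := by
      simp only [ne_eq, Sym2.eq_iff]
      rintro (⟨h, _⟩ | ⟨h, _⟩)
      · rcases hpeq with h' | h'
        · exact hub (h.trans h')
        · exact hub' (h.trans h')
      · exact huq h
    have hd3 : s(b, b') ≠ s(p, q) := by
      simp only [ne_eq, Sym2.eq_iff]
      rintro (⟨_, h⟩ | ⟨h, _⟩)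
      · exact hqb' h.symm
      · exact hqb h.symm
    have hsub : ({s(u, x), s(b, b'), s(p, q)} : Set (Sym2 V)) ⊆ H.edgeSet := by
      rintro e (rfl | rfl | rfl)
      · exact Subgraph.mem_edgeSet.mpr hex
      · exact Subgraph.mem_edgeSet.mpr hebb'
      · exact Subgraph.mem_edgeSet.mpr heq3
    have hcard3 : ({s(u, x), s(b, b'), s(p, q)} : Set (Sym2 V)).ncard = 3 := by
      rw [Set.ncard_insert_of_notMem (by simp [hd1, hd2]) (Set.toFinite _),
        Set.ncard_pair hd3]
    have hEeq : ({s(u, x), s(b, b'), s(p, q)} : Set (Sym2 V)) = H.edgeSet :=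
      Set.eq_of_subset_of_ncard_le hsub (hcard.trans hcard3.ge) hfin
    have hus : u ∈ (({b, b', q} : Set V)ᶜ) := by simp [hub, hub', huq]
    have hxs : x ∈ (({b, b', q} : Set V)ᶜ) := by simp [hxb, hxb', hxq]
    have hbn : b ∉ (({b, b', q} : Set V)ᶜ) := by simp
    have hb'n : b' ∉ (({b, b', q} : Set V)ᶜ) := by simp
    have hqn : q ∉ (({b, b', q} : Set V)ᶜ) := by simp
    have hpn : p ∉ (({b, b', q} : Set V)ᶜ) := by
      rcases hpeq with h | h <;> rw [h] <;> simp
    obtain ⟨p2, q2, hp2s, hq2s, he2⟩ := cross hc hu hb (({b, b', q} : Set V)ᶜ) hus (by simp)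
    have hmem2 : s(p2, q2) ∈ ({s(u, x), s(b, b'), s(p, q)} : Set (Sym2 V)) := by
      rw [hEeq]; exact Subgraph.mem_edgeSet.mpr he2
    simp only [Set.mem_insert_iff, Set.mem_singleton_iff, Sym2.eq_iff] at hmem2
    rcases hmem2 with (⟨h1, h2⟩ | ⟨h1, h2⟩) | (⟨h1, h2⟩ | ⟨h1, h2⟩) | (⟨h1, h2⟩ | ⟨h1, h2⟩)
    · exact hq2s (h2.symm ▸ hxs)
    · exact hq2s (h2.symm ▸ hus)
    · exact hbn (h1 ▸ hp2s)
    · exact hb'n (h1 ▸ hp2s)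
    · exact hpn (h1 ▸ hp2s)
    · exact hqn (h1 ▸ hp2s)
  · -- three distinct edges s(u,x), s(b,y), s(b',y')
    have hd1 : s(u, x) ≠ s(b, y) := by
      simp only [ne_eq, Sym2.eq_iff]
      rintro (⟨h, _⟩ | ⟨h, _⟩)
      · exact hub h
      · exact huy h
    have hd2 : s(u, x) ≠ s(b', y') := by
      simp only [ne_eq, Sym2.eq_iff]
      rintro (⟨h, _⟩ | ⟨h, _⟩)
      · exact hub' h
      · exact huy' h
    have hsub : ({s(u, x), s(b, y), s(b', y')} : Set (Sym2 V)) ⊆ H.edgeSet := by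
      rintro e (rfl | rfl | rfl)
      · exact Subgraph.mem_edgeSet.mpr hex
      · exact Subgraph.mem_edgeSet.mpr hey
      · exact Subgraph.mem_edgeSet.mpr hey'
    have hcard3 : ({s(u, x), s(b, y), s(b', y')} : Set (Sym2 V)).ncard = 3 := by
      rw [Set.ncard_insert_of_notMem (by simp [hd1, hd2]) (Set.toFinite _),
        Set.ncard_pair heq]
    have hEeq : ({s(u, x), s(b, y), s(b', y')} : Set (Sym2 V)) = H.edgeSet :=
      Set.eq_of_subset_of_ncard_le hsub (hcard.trans hcard3.ge) hfin
    have hus : u ∈ (({b, b', y, y'} : Set V)ᶜ) := by simp [hub, hub', huy, huy']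
    have hxs : x ∈ (({b, b', y, y'} : Set V)ᶜ) := by simp [hxb, hxb', hxy, hxy']
    have hbn : b ∉ (({b, b', y, y'} : Set V)ᶜ) := by simp
    have hb'n : b' ∉ (({b, b', y, y'} : Set V)ᶜ) := by simp
    have hyn : y ∉ (({b, b', y, y'} : Set V)ᶜ) := by simp
    have hy'n : y' ∉ (({b, b', y, y'} : Set V)ᶜ) := by simp
    obtain ⟨p2, q2, hp2s, hq2s, he2⟩ := cross hc hu hb (({b, b', y, y'} : Set V)ᶜ) hus (by simp)
    have hmem2 : s(p2, q2) ∈ ({s(u, x), s(b, y), s(b', y')} : Set (Sym2 V)) := by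
      rw [hEeq]; exact Subgraph.mem_edgeSet.mpr he2
    simp only [Set.mem_insert_iff, Set.mem_singleton_iff, Sym2.eq_iff] at hmem2
    rcases hmem2 with (⟨h1, h2⟩ | ⟨h1, h2⟩) | (⟨h1, h2⟩ | ⟨h1, h2⟩) | (⟨h1, h2⟩ | ⟨h1, h2⟩)
    · exact hq2s (h2.symm ▸ hxs)
    · exact hq2s (h2.symm ▸ hus)
    · exact hbn (h1 ▸ hp2s)
    · exact hyn (h1 ▸ hp2s)
    · exact hb'n (h1 ▸ hp2s)
    · exact hy'n (h1 ▸ hp2s)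

lemma top_conn {V : Type*} {G : SimpleGraph V} (h : G.Connected) :
    (⊤ : G.Subgraph).Connected :=
  SimpleGraph.Subgraph.connected_iff'.mpr ((Subgraph.topIso).connected_iff.mpr h)

lemma exists_H {V : Type*} [Fintype V] {G : SimpleGraph V} (hconn : G.Connected)
    (hsd : sdiam G 3 ≤ 3) (S : Finset V) (hS : S.card = 3) :
    ∃ H : G.Subgraph, H.Connected ∧ (S : Set V) ⊆ H.verts ∧ H.edgeSet.ncard ≤ 3 := by
  have hmem : ∀ T : Finset V, G.edgeSet.ncard ∈
      {m : ℕ | ∃ H : G.Subgraph, H.Connected ∧ (T : Set V) ⊆ H.verts ∧ H.edgeSet.ncard = m} := by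
    intro T
    exact ⟨⊤, top_conn hconn, by simp, by rw [Subgraph.edgeSet_top]⟩
  have hbdd : BddAbove {m : ℕ | ∃ T : Finset V, T.card = 3 ∧ steinerDist G ↑T = m} := by
    refine ⟨G.edgeSet.ncard, ?_⟩
    rintro m ⟨T, hT, rfl⟩
    exact Nat.sInf_le (hmem T)
  have h1 : steinerDist G ↑S ≤ 3 :=
    le_trans (le_csSup hbdd ⟨S, hS, rfl⟩) hsd
  have h2 := Nat.sInf_mem ⟨G.edgeSet.ncard, hmem S⟩
  obtain ⟨H, hc, hsub, hcard⟩ := h2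
  exact ⟨H, hc, hsub, hcard.le.trans h1⟩

theorem stmt17 {V : Type*} [Fintype V] (n : ℕ) (hn : 5 ≤ n)
    (hcard : Fintype.card V = n) (G : SimpleGraph V) (hconn : G.Connected)
    (hmax : maxDeg G = n - 2) (hsd : sdiam G 3 ≤ 3) :
    2 * n - 5 ≤ G.edgeSet.ncard := by
  classical
  have hVne : Nonempty V := Fintype.card_pos_iff.mp (by omega)
  obtain ⟨v, -, hv⟩ := Finset.exists_mem_eq_sup (Finset.univ : Finset V)
    Finset.univ_nonempty (fun w => (G.neighborSet w).ncard)
  have hncard_deg : ∀ w : V, (G.neighborSet w).ncard = G.degree w := by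
    intro w
    rw [Set.ncard_eq_toFinset_card', ← neighborFinset_def]
    rfl
  have hdeg : G.degree v = n - 2 := by
    rw [← hncard_deg, ← hv, ← hmax]; rfl
  -- the unique non-neighbor u of v
  set T : Finset V := Finset.univ \ insert v (G.neighborFinset v) with hT
  have hTcard : T.card = 1 := by
    rw [hT, Finset.card_sdiff_of_subset (Finset.subset_univ _),
      Finset.card_insert_of_notMem (G.notMem_neighborFinset_self v),
      Finset.card_univ, hcard]
    rw [G.card_neighborFinset_eq_degree, hdeg]
    omega
  obtain ⟨u, hu⟩ := Finset.card_eq_one.mp hTcard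
  have huT : u ∈ T := hu ▸ Finset.mem_singleton_self u
  have huv : u ≠ v := by
    rw [hT, Finset.mem_sdiff, Finset.mem_insert] at huT
    exact fun h => huT.2 (Or.inl h)
  have hvu : ¬ G.Adj v u := by
    rw [hT, Finset.mem_sdiff, Finset.mem_insert, mem_neighborFinset] at huT
    exact fun h => huT.2 (Or.inr h)
  have huv' : ¬ G.Adj u v := fun h => hvu h.symm
  set A : Finset V := G.neighborFinset u with hA
  set a : ℕ := A.card with ha
  have hvA : v ∉ A := by rw [hA, mem_neighborFinset]; exact huv'
  have huA : u ∉ A := G.notMem_neighborFinset_self u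
  set B : Finset V := Finset.univ \ insert u (insert v A) with hB
  have hBcard : B.card = n - (a + 2) := by
    rw [hB, Finset.card_sdiff_of_subset (Finset.subset_univ _), Finset.card_univ, hcard,
      Finset.card_insert_of_notMem (by simp [huv, huA]),
      Finset.card_insert_of_notMem hvA]
  have hsubcard : a + 2 ≤ n := by
    have := Finset.card_le_card (Finset.subset_univ (insert u (insert v A)))
    rwa [Finset.card_univ, hcard, Finset.card_insert_of_notMem (by simp [huv, huA]),
      Finset.card_insert_of_notMem hvA] at this
  have hBmem : ∀ b ∈ B, b ≠ u ∧ b ≠ v ∧ ¬ G.Adj u b := by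
    intro b hb
    rw [hB, Finset.mem_sdiff, Finset.mem_insert, Finset.mem_insert, mem_neighborFinset] at hb
    push_neg at hb
    exact ⟨hb.2.1, hb.2.2.1, hb.2.2.2⟩
  set B₀ : Finset V := B.filter (fun b => ∀ x, G.Adj u x → ¬ G.Adj b x) with hB₀
  have hB₀card : B₀.card ≤ 1 := by
    rw [Finset.card_le_one]
    intro b hbm b' hb'm
    by_contra hbb'
    rw [hB₀, Finset.mem_filter] at hbm hb'm
    obtain ⟨hbB, hbP⟩ := hbm
    obtain ⟨hb'B, hb'P⟩ := hb'm
    obtain ⟨hbu, hbv, hbadj⟩ := hBmem b hbB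
    obtain ⟨hb'u, hb'v, hb'adj⟩ := hBmem b' hb'B
    have hScard : ({u, b, b'} : Finset V).card = 3 := by
      rw [Finset.card_insert_of_notMem (by simp [Ne.symm hbu, Ne.symm hb'u]),
        Finset.card_insert_of_notMem (by simp [hbb']), Finset.card_singleton]
    obtain ⟨H, hHc, hHsub, hHcard⟩ := exists_H hconn hsd _ hScard
    exact key hHc hHcard (hHsub (by simp)) (hHsub (by simp)) (hHsub (by simp))
      (Ne.symm hbu) (Ne.symm hb'u) hbb' hbP hb'P hbadj hb'adj
  -- choice of an A-neighbor
  set f : V → V := fun b => if h : ∃ x, G.Adj u x ∧ G.Adj b x then h.choose else v with hf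
  have hfspec : ∀ b ∈ B \ B₀, G.Adj u (f b) ∧ G.Adj b (f b) := by
    intro b hb
    rw [Finset.mem_sdiff] at hb
    have hP : ∃ x, G.Adj u x ∧ G.Adj b x := by
      have := hb.2
      rw [hB₀, Finset.mem_filter] at this
      push_neg at this
      exact this hb.1
    simp only [hf, dif_pos hP]
    exact hP.choose_spec
  -- the three edge families
  set F1 : Finset (Sym2 V) := (G.neighborFinset v).image (fun w => s(v, w)) with hF1
  set F2 : Finset (Sym2 V) := A.image (fun w => s(u, w)) with hF2
  set F3 : Finset (Sym2 V) := (B \ B₀).image (fun b => s(b, f b)) with hF3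
  have hF1card : F1.card = n - 2 := by
    rw [hF1, Finset.card_image_of_injOn, G.card_neighborFinset_eq_degree, hdeg]
    intro w1 h1 w2 h2 he
    rw [Sym2.eq_iff] at he
    rcases he with ⟨-, h⟩ | ⟨h, -⟩
    · exact h
    · exact absurd h.symm (G.ne_of_adj ((G.mem_neighborFinset v w2).mp h2)).symm
  have hF2card : F2.card = a := by
    rw [hF2, Finset.card_image_of_injOn]
    intro w1 h1 w2 h2 he
    rw [Sym2.eq_iff] at he
    rcases he with ⟨-, h⟩ | ⟨h, -⟩
    · exact h
    · exact absurd h.symm (G.ne_of_adj ((G.mem_neighborFinset u w2).mp h2)).symm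
  have hF3card : F3.card = (B \ B₀).card := by
    rw [hF3, Finset.card_image_of_injOn]
    intro b1 h1 b2 h2 he
    rw [Sym2.eq_iff] at he
    rcases he with ⟨h, -⟩ | ⟨h, -⟩
    · exact h
    · exfalso
      have := (hfspec b2 h2).1
      rw [← h] at this
      exact ((hBmem b1 (Finset.mem_sdiff.mp h1).1).2.2) this
  -- membership in edgeFinset
  have hF1sub : F1 ⊆ G.edgeFinset := by
    intro e he
    rw [hF1] at he
    obtain ⟨w, hw, rfl⟩ := Finset.mem_image.mp he
    rw [mem_edgeFinset, mem_edgeSet]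
    exact (G.mem_neighborFinset v w).mp hw
  have hF2sub : F2 ⊆ G.edgeFinset := by
    intro e he
    rw [hF2] at he
    obtain ⟨w, hw, rfl⟩ := Finset.mem_image.mp he
    rw [mem_edgeFinset, mem_edgeSet]
    exact (G.mem_neighborFinset u w).mp hw
  have hF3sub : F3 ⊆ G.edgeFinset := by
    intro e he
    rw [hF3] at he
    obtain ⟨b, hbm, rfl⟩ := Finset.mem_image.mp he
    rw [mem_edgeFinset, mem_edgeSet]
    exact (hfspec b hbm).2
  -- disjointness
  have hd12 : Disjoint F1 F2 := by
    rw [Finset.disjoint_left]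
    intro e he1 he2
    rw [hF1] at he1; rw [hF2] at he2
    obtain ⟨w1, hw1, rfl⟩ := Finset.mem_image.mp he1
    obtain ⟨w2, hw2, he⟩ := Finset.mem_image.mp he2
    rw [Sym2.eq_iff] at he
    rcases he with ⟨h, -⟩ | ⟨-, h⟩
    · exact huv h
    · exact hvA (h ▸ hw2)
  have hd13 : Disjoint F1 F3 := by
    rw [Finset.disjoint_left]
    intro e he1 he3
    rw [hF1] at he1; rw [hF3] at he3
    obtain ⟨w1, hw1, rfl⟩ := Finset.mem_image.mp he1
    obtain ⟨b, hbm, he⟩ := Finset.mem_image.mp he3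
    rw [Sym2.eq_iff] at he
    rcases he with ⟨h, -⟩ | ⟨-, h⟩
    · exact (hBmem b (Finset.mem_sdiff.mp hbm).1).2.1 h
    · exact huv' (h ▸ (hfspec b hbm).1)

  have hd23 : Disjoint F2 F3 := by
    rw [Finset.disjoint_left]
    intro e he2 he3
    rw [hF2] at he2; rw [hF3] at he3
    obtain ⟨w2, hw2, rfl⟩ := Finset.mem_image.mp he2
    obtain ⟨b, hbm, he⟩ := Finset.mem_image.mp he3
    rw [Sym2.eq_iff] at he
    rcases he with ⟨h, -⟩ | ⟨-, h⟩
    · exact (hBmem b (Finset.mem_sdiff.mp hbm).1).1 h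
    · exact G.loopless.irrefl u (h ▸ (hfspec b hbm).1)
  have hunion : (F1 ∪ F2 ∪ F3).card = F1.card + F2.card + F3.card := by
    rw [Finset.card_union_of_disjoint (by
      rw [Finset.disjoint_union_left]; exact ⟨hd13, hd23⟩),
      Finset.card_union_of_disjoint hd12]
  have hsubE : F1 ∪ F2 ∪ F3 ⊆ G.edgeFinset :=
    Finset.union_subset (Finset.union_subset hF1sub hF2sub) hF3sub
  have hle : (F1 ∪ F2 ∪ F3).card ≤ G.edgeSet.ncard := by
    rw [← G.coe_edgeFinset, Set.ncard_coe_finset]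
    exact Finset.card_le_card hsubE
  have hsdiffcard : B.card - B₀.card ≤ (B \ B₀).card := Finset.le_card_sdiff B₀ B
  rw [hunion, hF1card, hF2card, hF3card] at hle
  omega
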